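/- Let K be a field, let N, E ∈ K[X] with E(0) ≠ 0, let m be a positive integer, and set D := X^m · E. Let N/D = p + r/X^m + s/E be the ppfraction expansion of N/D in K(X) with respect to (X^m, E), so p, r, s ∈ K[X], deg r < m, and deg s < deg E. Then, regarding N and E as formal power series in K[[X]] (where E is invertible since its constant coefficient is nonzero), the coefficient of X^i in r equals the coefficient of X^i in the power series N·E^{−1} for every i with 0 ≤ i < m; equivalently, r is the truncation ⌈X^m⌉(N/E) of the power series N/E obtained by deleting all terms X^n with n ≥ m. -/

import Mathlib

open Polynomial

/-- Theorem `t-ppfraction-main-0`: for `D = X^m·E` with `E(0) ≠ 0`, the numerator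
`r` of the fractional part of `N/D` with respect to `X^m` is the truncation of
the power series `N/E` below degree `m`. -/
theorem stmt8 {K : Type*} [Field K] (N E : K[X]) (hE : E.eval 0 ≠ 0)
    (m : ℕ) (hm : 0 < m) (p r s : K[X])
    (hr : r.degree < (m : WithBot ℕ)) (hs : s.degree < E.degree)
    (h : algebraMap K[X] (RatFunc K) N / algebraMap K[X] (RatFunc K) (X ^ m * E) =
      algebraMap K[X] (RatFunc K) p +
        algebraMap K[X] (RatFunc K) r / algebraMap K[X] (RatFunc K) (X ^ m) +
        algebraMap K[X] (RatFunc K) s / algebraMap K[X] (RatFunc K) E) :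
    ∀ i < m, r.coeff i =
      PowerSeries.coeff i ((N : PowerSeries K) * (E : PowerSeries K)⁻¹) := by
  have hE0 : E ≠ 0 := fun h0 => hE (by simp [h0])
  have hX : (X : K[X]) ^ m ≠ 0 := pow_ne_zero _ X_ne_zero
  -- clear denominators
  have hinj : Function.Injective (algebraMap K[X] (RatFunc K)) :=
    IsFractionRing.injective _ _
  have hXr : algebraMap K[X] (RatFunc K) (X ^ m) ≠ 0 := by
    simpa using (map_ne_zero_iff _ hinj).mpr hX
  have hEr : algebraMap K[X] (RatFunc K) E ≠ 0 := (map_ne_zero_iff _ hinj).mpr hE0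
  have key : N = p * (X ^ m * E) + r * E + s * X ^ m := by
    have hXE : algebraMap K[X] (RatFunc K) (X ^ m * E) ≠ 0 := by
      rw [map_mul]; exact mul_ne_zero hXr hEr
    rw [div_eq_iff hXE] at h
    apply hinj
    have hRX : (RatFunc.X : RatFunc K) ≠ 0 := RatFunc.X_ne_zero
    simp only [map_add, map_mul, map_pow] at h ⊢
    rw [h]
    field_simp
  -- move to power series
  have hEu : (E : PowerSeries K) * (E : PowerSeries K)⁻¹ = 1 := by
    apply PowerSeries.mul_inv_cancel
    simpa [PowerSeries.coeff_zero_eq_constantCoeff, coeff_zero_eq_eval_zero] using hE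
  have keyPS : (N : PowerSeries K) * (E : PowerSeries K)⁻¹ =
      (r : PowerSeries K) + (PowerSeries.X) ^ m *
        ((p : PowerSeries K) + (s : PowerSeries K) * (E : PowerSeries K)⁻¹) := by
    have : (N : PowerSeries K) =
        (p : PowerSeries K) * ((PowerSeries.X) ^ m * (E : PowerSeries K)) +
        (r : PowerSeries K) * (E : PowerSeries K) +
        (s : PowerSeries K) * (PowerSeries.X) ^ m := by
      rw [key]
      push_cast
      ring
    rw [this]
    linear_combination ((p : PowerSeries K) * PowerSeries.X ^ m + (r : PowerSeries K)) * hEu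
  intro i hi
  have hcoeff : PowerSeries.coeff i ((PowerSeries.X : PowerSeries K) ^ m *
      ((p : PowerSeries K) + (s : PowerSeries K) * (E : PowerSeries K)⁻¹)) = 0 := by
    rw [PowerSeries.coeff_X_pow_mul']
    simp [Nat.not_le_of_lt hi]
  rw [keyPS, map_add, hcoeff, add_zero, Polynomial.coeff_coe]
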